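/- Let f : ℂ → ℂ be continuously differentiable (in the real sense) and bounded, and suppose (ð₁f)(z) = 0 for every z ∈ ℂ, i.e. z ↦ (1+|z|²)f(z) is holomorphic on ℂ. Then there exist constants B₋₁, B₀, B₁ ∈ ℂ such that f(z) = (B₋₁ + B₀z + B₁z²)/(1+|z|²) for all z ∈ ℂ. (This is the paper's Eq. (27): a spin-weight-1 function on the sphere annihilated by ð is a linear combination of the three harmonics ₁Y_{1,m}, m = −1, 0, 1; it is applied to Ψ₁⁰, for which the stationary Killing equations give ðΨ₁⁰ = 0.) -/

import Mathlib

open Complex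

/-- The Wirtinger derivative `∂_z f = (1/2)(∂ₓf − i∂_yf)` of `f : ℂ → ℂ`,
viewed as a real-differentiable function on `ℝ²`. -/
noncomputable def wirtD (f : ℂ → ℂ) (z : ℂ) : ℂ :=
  (1 / 2 : ℂ) * (fderiv ℝ f z 1 - Complex.I * fderiv ℝ f z Complex.I)

/-- The conjugate Wirtinger derivative `∂_z̄ f = (1/2)(∂ₓf + i∂_yf)`. -/
noncomputable def wirtDBar (f : ℂ → ℂ) (z : ℂ) : ℂ :=
  (1 / 2 : ℂ) * (fderiv ℝ f z 1 + Complex.I * fderiv ℝ f z Complex.I)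

/-- The spin-weight-`s` Newman–Penrose operator
`(ð_s f)(z) = 2^(−1/2) (1+|z|²)^(1−s) ∂_z̄[(1+|z|²)^s f](z)`. -/
noncomputable def edth (s : ℤ) (f : ℂ → ℂ) (z : ℂ) : ℂ :=
  (Real.sqrt 2 : ℂ)⁻¹ * (1 + ‖z‖ ^ 2 : ℂ) ^ (1 - s) *
    wirtDBar (fun w => (1 + ‖w‖ ^ 2 : ℂ) ^ s * f w) z

/-- The spin-weight-`s` Newman–Penrose operator
`(ð̄_s f)(z) = 2^(−1/2) (1+|z|²)^(1+s) ∂_z[(1+|z|²)^(−s) f](z)`. -/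
noncomputable def edthBar (s : ℤ) (f : ℂ → ℂ) (z : ℂ) : ℂ :=
  (Real.sqrt 2 : ℂ)⁻¹ * (1 + ‖z‖ ^ 2 : ℂ) ^ (1 + s) *
    wirtD (fun w => (1 + ‖w‖ ^ 2 : ℂ) ^ (-s) * f w) z

/-- The representative `Y_k(z) = z^k (1+|z|²)^(−2)` of the spin-weight-2,
`l = 2` spherical harmonic `₂Y_{2,k−2}` in the stereographic chart. -/
noncomputable def Ysph (k : ℕ) (z : ℂ) : ℂ :=
  z ^ k / (1 + ‖z‖ ^ 2 : ℂ) ^ 2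

private theorem holo_of_wirtDBar {g : ℂ → ℂ} (hd : Differentiable ℝ g)
    (h : ∀ z, wirtDBar g z = 0) : Differentiable ℂ g := by
  intro z
  set c := fderiv ℝ g z 1 with hc
  have h0 : fderiv ℝ g z 1 + Complex.I * fderiv ℝ g z Complex.I = 0 := by
    have := h z
    unfold wirtDBar at this
    field_simp at this
    linear_combination this
  have hI : fderiv ℝ g z Complex.I = Complex.I * c := by
    rw [hc]; linear_combination (-Complex.I) * h0 + (fderiv ℝ g z Complex.I) * Complex.I_sq
  set L : ℂ →L[ℂ] ℂ := c • (ContinuousLinearMap.id ℂ ℂ) with hL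
  have hres : L.restrictScalars ℝ = fderiv ℝ g z := by
    ext w
    have hw : w = w.re • (1 : ℂ) + w.im • Complex.I := by
      simp [Complex.real_smul, Complex.re_add_im]
    rw [ContinuousLinearMap.coe_restrictScalars']
    calc L w = c * w := by simp [hL, ContinuousLinearMap.smul_apply]
    _ = fderiv ℝ g z w := by
        conv_rhs => rw [hw]
        rw [map_add, map_smul, map_smul, hI]
        simp only [Complex.real_smul, smul_eq_mul, ← hc]
        conv_lhs => rw [← Complex.re_add_im w]
        ring
  exact (hasFDerivAt_of_restrictScalars ℝ (hd z).hasFDerivAt hres).differentiableAt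

/-- A bounded `C¹` spin-weight-1 function on the sphere with `ð₁ f = 0` is a
combination of the three harmonics `₁Y_{1,m}`, `m = −1, 0, 1`. -/
theorem edth_one_kernel (f : ℂ → ℂ) (hf : ContDiff ℝ 1 f)
    (hbd : ∃ M : ℝ, ∀ z : ℂ, ‖f z‖ ≤ M)
    (hker : ∀ z : ℂ, edth 1 f z = 0) :
    ∃ Bm1 B₀ B₁ : ℂ, ∀ z : ℂ,
      f z = (Bm1 + B₀ * z + B₁ * z ^ 2) / (1 + ‖z‖ ^ 2 : ℂ) := by
  obtain ⟨M, hM⟩ := hbd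
  set g : ℂ → ℂ := fun w => (1 + ‖w‖ ^ 2 : ℂ) * f w with hg
  -- the weight is 1 + w * conj w
  have hwt : ∀ w : ℂ, (1 + ‖w‖ ^ 2 : ℂ) = 1 + w * (starRingEnd ℂ) w := by
    intro w
    rw [Complex.mul_conj]
    norm_cast
    rw [Complex.sq_norm]
  -- g is real-differentiable
  have hdR : Differentiable ℝ g := by
    have h1 : Differentiable ℝ (fun w : ℂ => 1 + w * (starRingEnd ℂ) w) := by
      apply Differentiable.add (differentiable_const _)
      exact differentiable_id.mul Complex.conjCLE.differentiable
    have hgeq : g = fun w : ℂ => (1 + w * (starRingEnd ℂ) w) * f w := by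
      funext w
      show (1 + ‖w‖ ^ 2 : ℂ) * f w = _
      rw [hwt w]
    rw [hgeq]
    exact h1.mul (hf.differentiable one_ne_zero)
  -- wirtDBar g = 0
  have hbar : ∀ z : ℂ, wirtDBar g z = 0 := by
    intro z
    have h := hker z
    unfold edth at h
    have hfun : (fun w => (1 + ‖w‖ ^ 2 : ℂ) ^ (1 : ℤ) * f w) = g := by
      funext w; rw [zpow_one]
    rw [hfun, sub_self, zpow_zero, mul_one] at h
    have hs : ((Real.sqrt 2 : ℝ) : ℂ)⁻¹ ≠ 0 := by
      simp [Real.sqrt_eq_zero', Complex.ofReal_ne_zero]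
    exact (mul_eq_zero.mp h).resolve_left hs
  have hdC : Differentiable ℂ g := holo_of_wirtDBar hdR hbar
  -- bounds
  have hM0 : 0 ≤ M := le_trans (norm_nonneg _) (hM 0)
  have habs : ∀ z : ℂ, ‖g z‖ ≤ M * (1 + ‖z‖ ^ 2) := by
    intro z
    rw [hg]
    simp only [norm_mul]
    have h1 : ‖1 + ((‖z‖ : ℝ) : ℂ) ^ 2‖ = 1 + ‖z‖ ^ 2 := by
      norm_cast
      rw [Real.norm_eq_abs]
      exact abs_of_nonneg (by positivity)
    rw [h1, mul_comm M]
    exact mul_le_mul_of_nonneg_left (hM z) (by positivity)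
  -- divided differences
  set g₁ : ℂ → ℂ := dslope g 0 with hg₁
  set g₂ : ℂ → ℂ := dslope g₁ 0 with hg₂
  have hd₁ : Differentiable ℂ g₁ := by
    rw [← differentiableOn_univ] at hdC ⊢
    exact (Complex.differentiableOn_dslope Filter.univ_mem).mpr hdC
  have hd₂ : Differentiable ℂ g₂ := by
    rw [← differentiableOn_univ] at hd₁ ⊢
    exact (Complex.differentiableOn_dslope Filter.univ_mem).mpr hd₁
  have key₁ : ∀ z : ℂ, z * g₁ z = g z - g 0 := by
    intro z
    have := sub_smul_dslope g 0 z
    simpa [smul_eq_mul] using this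
  have key₂ : ∀ z : ℂ, z * g₂ z = g₁ z - g₁ 0 := by
    intro z
    have := sub_smul_dslope g₁ 0 z
    simpa [smul_eq_mul] using this
  -- bound for g₂ away from 0
  have hg0 : ‖g 0‖ ≤ M := by
    have := habs 0; simpa using this
  set c₁ : ℝ := ‖g₁ 0‖ with hc₁
  have hbig : ∀ z : ℂ, 1 ≤ ‖z‖ → ‖g₂ z‖ ≤ 3 * M + c₁ := by
    intro z hz
    set a := ‖z‖ with ha
    set p := ‖g₁ z‖ with hp
    set q := ‖g₂ z‖ with hq
    have h1 : a * p ≤ M * (1 + a ^ 2) + M := by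
      rw [ha, hp, ← norm_mul]
      calc ‖z * g₁ z‖ = ‖g z - g 0‖ := by rw [key₁ z]
      _ ≤ ‖g z‖ + ‖g 0‖ := by
          simpa using norm_sub_le (g z) (g 0)
      _ ≤ M * (1 + a ^ 2) + M := add_le_add (habs z) hg0
    have h2 : a * q ≤ p + c₁ := by
      rw [ha, hq, ← norm_mul]
      calc ‖z * g₂ z‖ = ‖g₁ z - g₁ 0‖ := by rw [key₂ z]
      _ ≤ p + c₁ := by simpa [hp, hc₁] using norm_sub_le (g₁ z) (g₁ 0)
    have hp0 : 0 ≤ p := norm_nonneg _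
    have hq0 : 0 ≤ q := norm_nonneg _
    have hc₁0 : 0 ≤ c₁ := norm_nonneg _
    have hple : p ≤ 3 * M * a := by nlinarith
    nlinarith
  -- bound on the closed ball
  obtain ⟨C, hC⟩ := (isCompact_closedBall (0 : ℂ) 1).exists_bound_of_continuousOn
    hd₂.continuous.continuousOn
  have hbdd : Bornology.IsBounded (Set.range g₂) := by
    apply (Metric.isBounded_iff_subset_closedBall 0).mpr
    refine ⟨max C (3 * M + c₁), ?_⟩
    rintro _ ⟨z, rfl⟩
    rw [Metric.mem_closedBall, dist_zero_right]
    rcases le_or_gt ‖z‖ 1 with h | h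
    · exact le_trans (hC z (by simpa [Metric.mem_closedBall] using h)) (le_max_left _ _)
    · exact le_trans (hbig z h.le) (le_max_right _ _)
  obtain ⟨B₁, hB₁⟩ := hd₂.exists_const_forall_eq_of_bounded hbdd
  refine ⟨g 0, g₁ 0, B₁, fun z => ?_⟩
  have hne : (1 + ‖z‖ ^ 2 : ℂ) ≠ 0 := by
    have : ((1 + ‖z‖ ^ 2 : ℝ) : ℂ) ≠ 0 := by
      rw [Complex.ofReal_ne_zero]; positivity
    simpa using this
  rw [eq_div_iff hne]
  have e1 := key₁ z
  have e2 := key₂ z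
  rw [hB₁ z] at e2
  have hgz : g z = (1 + ‖z‖ ^ 2 : ℂ) * f z := rfl
  linear_combination -e1 - z * e2 - hgz
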